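/- Consider the q-colour unfair Pólya urn with m_1 ≥ m_j for all j ≠ 1. If initially colour 1 has a plurality (strictly more balls than each other colour individually), then with positive probability colour 1 has a plurality at every time n ≥ 0. -/

import Mathlib

open MeasureTheory ProbabilityTheory Filter Real

/-- A `q`-colour unfair Pólya urn: `X n i` is the number of balls of colour `i` after `n`
draws. At each step a ball is drawn uniformly at random; a draw of colour `i` adds `m i`
balls of colour `i`. The uniform drawing rule is encoded by the conditional probability
(given the natural filtration) of drawing colour `i` being `X n i / ∑ j, X n j`. -/
structure PolyaUrnQ (q : ℕ) (Ω : Type*) [MeasurableSpace Ω] where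
  μ : Measure Ω
  isProb : IsProbabilityMeasure μ
  m : Fin q → ℕ
  m_pos : ∀ i, 0 < m i
  X : ℕ → Fin q → Ω → ℕ
  measX : ∀ n i, Measurable (X n i)
  /-- at each step, some colour `i` is drawn and `m i` balls of colour `i` are added -/
  step : ∀ n ω, ∃ i : Fin q, ∀ j : Fin q,
      X (n+1) j ω = X n j ω + (if j = i then m i else 0)
  /-- the natural filtration generated by the process `X` -/
  𝓕 : Filtration ℕ ‹MeasurableSpace Ω›
  h𝓕 : ∀ n, 𝓕 n = ⨆ i ∈ Set.Iic n, MeasurableSpace.comap (fun ω j => X i j ω) inferInstance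
  /-- conditionally on the past, colour `i` is drawn at step `n`
  with probability `X n i / ∑ j, X n j` -/
  hcond : ∀ n (i : Fin q),
      (μ[(fun ω => if X (n+1) i ω = X n i ω + m i then (1:ℝ) else 0) | 𝓕 n])
        =ᵐ[μ] fun ω => (X n i ω : ℝ) / (∑ j : Fin q, (X n j ω : ℝ))

namespace PolyaAux

lemma drift_real (a b S mj mc : ℝ) (ha : 0 < a) (hb : 0 < b) (hS : a + b ≤ S)
    (hmj : 0 < mj) (hm : mj ≤ mc) :
    (a/S)*((a+mj)/((a+mj)+b)) + (b/S)*(a/(a+(b+mc))) + ((S-a-b)/S)*(a/(a+b)) ≤ a/(a+b) := by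
  have hS0 : 0 < S := lt_of_lt_of_le (by linarith) hS
  have h1 : 0 < (a+mj)+b := by linarith
  have h2 : 0 < a+(b+mc) := by linarith
  have h3 : 0 < a+b := by linarith
  have key : (a/S)*((a+mj)/((a+mj)+b)) + (b/S)*(a/(a+(b+mc))) + ((S-a-b)/S)*(a/(a+b)) - a/(a+b)
      = (a*b/S) * (mj/(((a+mj)+b)*(a+b)) - mc/((a+(b+mc))*(a+b))) := by
    field_simp
    ring
  have hd : mj/(((a+mj)+b)*(a+b)) - mc/((a+(b+mc))*(a+b)) ≤ 0 := by
    rw [sub_nonpos, div_le_div_iff₀ (by positivity) (by positivity)]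
    nlinarith [mul_le_mul_of_nonneg_right (mul_le_mul_of_nonneg_right hm h3.le) h3.le, mul_pos hmj h3]
  nlinarith [mul_nonneg (by positivity : (0:ℝ) ≤ a*b/S) (neg_nonneg.mpr hd)]

lemma frac_nonneg {x y : ℝ} (hx : 0 ≤ x) (hy : 0 ≤ y) : 0 ≤ x/(x+y) := by positivity

lemma frac_le_one {x y : ℝ} (hx : 0 ≤ x) (hy : 0 ≤ y) : x/(x+y) ≤ 1 := by
  rcases eq_or_lt_of_le (by linarith : (0:ℝ) ≤ x + y) with h | h
  · simp [← h]
  · rw [div_le_one h]; linarith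

variable {q : ℕ} {Ω : Type*} [MeasurableSpace Ω] (U : PolyaUrnQ q Ω)

lemma mono_step (n : ℕ) (j : Fin q) (ω : Ω) : U.X n j ω ≤ U.X (n+1) j ω := by
  obtain ⟨i, hi⟩ := U.step n ω
  rw [hi j]; exact Nat.le_add_right _ _

lemma mono (k n : ℕ) (h : k ≤ n) (j : Fin q) (ω : Ω) : U.X k j ω ≤ U.X n j ω := by
  induction n with
  | zero => simp_all
  | succ n ih =>
    rcases Nat.lt_or_ge k (n+1) with h'|h'
    · exact le_trans (ih (by omega)) (mono_step U n j ω)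
    · have : k = n+1 := by omega
      simp [this]

lemma draw_unique {n : ℕ} {i : Fin q} {ω : Ω} (h : U.X (n+1) i ω = U.X n i ω + U.m i) :
    ∀ j, U.X (n+1) j ω = U.X n j ω + (if j = i then U.m i else 0) := by
  obtain ⟨i0, hi0⟩ := U.step n ω
  have : i = i0 := by
    by_contra hne
    have h2 := hi0 i
    rw [if_neg hne] at h2
    have := U.m_pos i
    omega
  subst this; exact hi0

lemma measX_filt {k n : ℕ} (h : k ≤ n) (j : Fin q) : Measurable[U.𝓕 n] (U.X k j) := by
  have h1 : MeasurableSpace.comap (fun ω (j : Fin q) => U.X k j ω) inferInstance ≤ U.𝓕 n := by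
    rw [U.h𝓕 n]
    exact le_iSup₂ (f := fun i (_ : i ∈ Set.Iic n) =>
      MeasurableSpace.comap (fun ω (j : Fin q) => U.X i j ω) inferInstance) k (Set.mem_Iic.mpr h)
  have h2 : Measurable[U.𝓕 n] (fun ω (j : Fin q) => U.X k j ω) := fun s hs => h1 _ ⟨s, hs, rfl⟩
  exact (measurable_pi_apply j).comp h2

/-- measurability of a relation between two ℕ-valued measurable functions -/
lemma measurableSet_rel {m' : MeasurableSpace Ω} {f g : Ω → ℕ} (hf : Measurable[m'] f)
    (hg : Measurable[m'] g) (R : ℕ → ℕ → Prop) : MeasurableSet[m'] {ω | R (f ω) (g ω)} := by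
  have : {ω | R (f ω) (g ω)} = ⋃ s : ℕ, ⋃ t : ℕ, ⋃ (_ : R s t), (f ⁻¹' {s} ∩ g ⁻¹' {t}) := by
    ext ω
    simp only [Set.mem_iUnion, Set.mem_inter_iff, Set.mem_preimage, Set.mem_singleton_iff,
      Set.mem_setOf_eq]
    exact ⟨fun h => ⟨f ω, g ω, h, rfl, rfl⟩, by rintro ⟨s, t, h, rfl, rfl⟩; exact h⟩
  rw [this]
  refine MeasurableSet.iUnion fun s => MeasurableSet.iUnion fun t => MeasurableSet.iUnion fun _ =>
    (hf (measurableSet_singleton s)).inter (hg (measurableSet_singleton t))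

/-- the post-draw weight function: value of `W` at time `n+1` if colour `i` is drawn at `n` -/
noncomputable def WA (c i : Fin q) (n : ℕ) (ω : Ω) : ℝ :=
  ∑ j ∈ Finset.univ.erase c,
    ((U.X n j ω : ℝ) + (if j = i then (U.m i : ℝ) else 0)) /
      (((U.X n j ω : ℝ) + (if j = i then (U.m i : ℝ) else 0)) +
        ((U.X n c ω : ℝ) + (if c = i then (U.m i : ℝ) else 0)))

noncomputable def W (c : Fin q) (n : ℕ) (ω : Ω) : ℝ :=
  ∑ j ∈ Finset.univ.erase c, (U.X n j ω : ℝ) / ((U.X n j ω : ℝ) + (U.X n c ω : ℝ))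

lemma cast_meas {α : Type*} {m' : MeasurableSpace α} {f : α → ℕ} (h : Measurable[m'] f) :
    Measurable[m'] (fun ω => (f ω : ℝ)) :=
  measurable_from_top.comp h

lemma W_meas_filt (c : Fin q) (n : ℕ) : Measurable[U.𝓕 n] (W U c n) :=
  Finset.measurable_sum _ fun j _ =>
    (cast_meas (measX_filt U le_rfl j)).div
      ((cast_meas (measX_filt U le_rfl j)).add (cast_meas (measX_filt U le_rfl c)))

lemma W_meas (c : Fin q) (n : ℕ) : Measurable (W U c n) :=
  (W_meas_filt U c n).mono (U.𝓕.le n) le_rfl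

lemma WA_meas_filt (c i : Fin q) (n : ℕ) : Measurable[U.𝓕 n] (WA U c i n) := by
  refine Finset.measurable_sum _ fun j _ => Measurable.div ?_ ?_
  · exact (cast_meas (measX_filt U le_rfl j)).add measurable_const
  · exact ((cast_meas (measX_filt U le_rfl j)).add measurable_const).add
      ((cast_meas (measX_filt U le_rfl c)).add measurable_const)

lemma WA_meas (c i : Fin q) (n : ℕ) : Measurable (WA U c i n) :=
  (WA_meas_filt U c i n).mono (U.𝓕.le n) le_rfl

lemma W_nonneg (c : Fin q) (n : ℕ) (ω : Ω) : 0 ≤ W U c n ω :=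
  Finset.sum_nonneg fun j _ => frac_nonneg (by positivity) (by positivity)

lemma W_le (c : Fin q) (n : ℕ) (ω : Ω) : W U c n ω ≤ q := by
  calc W U c n ω ≤ ∑ j ∈ Finset.univ.erase c, (1:ℝ) :=
        Finset.sum_le_sum fun j _ => frac_le_one (by positivity) (by positivity)
    _ ≤ ∑ j : Fin q, (1:ℝ) := Finset.sum_le_sum_of_subset_of_nonneg
        (Finset.erase_subset _ _) (by intros; norm_num)
    _ = q := by simp

lemma WA_nonneg (c i : Fin q) (n : ℕ) (ω : Ω) : 0 ≤ WA U c i n ω :=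
  Finset.sum_nonneg fun j _ => frac_nonneg (by positivity) (by positivity)

lemma WA_le (c i : Fin q) (n : ℕ) (ω : Ω) : WA U c i n ω ≤ q := by
  calc WA U c i n ω ≤ ∑ j ∈ Finset.univ.erase c, (1:ℝ) :=
        Finset.sum_le_sum fun j _ => frac_le_one (by positivity) (by positivity)
    _ ≤ ∑ j : Fin q, (1:ℝ) := Finset.sum_le_sum_of_subset_of_nonneg
        (Finset.erase_subset _ _) (by intros; norm_num)
    _ = q := by simp



lemma integrable_of_bdd {f : Ω → ℝ} (hf : Measurable f) (Cb : ℝ) (h : ∀ ω, |f ω| ≤ Cb) :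
    Integrable f U.μ := by
  haveI := U.isProb
  exact (integrable_const Cb).mono' hf.aestronglyMeasurable (Eventually.of_forall h)

/-- decomposition of `W` at time `n+1` over which colour was drawn -/
lemma decomp (c : Fin q) (n : ℕ) (ω : Ω) :
    W U c (n+1) ω = ∑ i : Fin q,
      WA U c i n ω * (if U.X (n+1) i ω = U.X n i ω + U.m i then (1:ℝ) else 0) := by
  obtain ⟨i0, hi0⟩ := U.step n ω
  rw [Finset.sum_eq_single i0]
  · have hdraw : U.X (n+1) i0 ω = U.X n i0 ω + U.m i0 := by rw [hi0 i0, if_pos rfl]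
    rw [if_pos hdraw, mul_one]
    unfold W WA
    refine Finset.sum_congr rfl fun j _ => ?_
    rw [hi0 j, hi0 c]
    push_cast
    rcases eq_or_ne j i0 with h | h <;> rcases eq_or_ne c i0 with h' | h' <;>
      simp [h, h']
  · intro i _ hne
    have : U.X (n+1) i ω ≠ U.X n i ω + U.m i := by
      rw [hi0 i, if_neg hne]
      have := U.m_pos i
      omega
    rw [if_neg this, mul_zero]
  · intro h
    exact absurd (Finset.mem_univ i0) h

/-- pointwise supermartingale drift inequality -/
lemma drift_pt (c : Fin q) (hm : ∀ j, U.m j ≤ U.m c) (hpos : ∀ j ω, 1 ≤ U.X 0 j ω)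
    (n : ℕ) (ω : Ω) :
    ∑ i : Fin q, WA U c i n ω * ((U.X n i ω : ℝ) / (∑ j : Fin q, (U.X n j ω : ℝ)))
      ≤ W U c n ω := by
  have hge : ∀ j, 1 ≤ U.X n j ω := fun j => le_trans (hpos j ω) (mono U 0 n (Nat.zero_le n) j ω)
  have hge' : ∀ j, (1:ℝ) ≤ (U.X n j ω : ℝ) := fun j => by exact_mod_cast hge j
  set S : ℝ := ∑ j : Fin q, (U.X n j ω : ℝ) with hS
  -- swap the sums
  have hswap : ∑ i : Fin q, WA U c i n ω * ((U.X n i ω : ℝ) / S)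
      = ∑ j ∈ Finset.univ.erase c, ∑ i : Fin q, ((U.X n i ω : ℝ) / S) *
        (((U.X n j ω : ℝ) + (if j = i then (U.m i : ℝ) else 0)) /
          (((U.X n j ω : ℝ) + (if j = i then (U.m i : ℝ) else 0)) +
            ((U.X n c ω : ℝ) + (if c = i then (U.m i : ℝ) else 0)))) := by
    unfold WA
    rw [Finset.sum_comm]
    refine Finset.sum_congr rfl fun j _ => ?_
    rw [Finset.sum_mul]
    exact Finset.sum_congr rfl fun i _ => by ring
  rw [hswap]
  unfold W
  refine Finset.sum_le_sum fun j hj => ?_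
  have hjc : j ≠ c := Finset.ne_of_mem_erase hj
  have hcj : c ≠ j := hjc.symm
  set a : ℝ := (U.X n j ω : ℝ) with ha
  set b : ℝ := (U.X n c ω : ℝ) with hb
  have hcu : c ∈ Finset.univ.erase j := Finset.mem_erase.2 ⟨hcj, Finset.mem_univ c⟩
  -- split the sum over i into i = j, i = c and the rest
  rw [← Finset.add_sum_erase _ _ (Finset.mem_univ j), ← Finset.add_sum_erase _ _ hcu]
  have hterm_j : ((U.X n j ω : ℝ) / S) *
      ((a + (if j = j then (U.m j : ℝ) else 0)) /
        ((a + (if j = j then (U.m j : ℝ) else 0)) + (b + (if c = j then (U.m j : ℝ) else 0))))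
      = (a / S) * ((a + (U.m j : ℝ)) / ((a + (U.m j : ℝ)) + b)) := by
    rw [if_pos rfl, if_neg hcj, add_zero]
  have hterm_c : ((U.X n c ω : ℝ) / S) *
      ((a + (if j = c then (U.m c : ℝ) else 0)) /
        ((a + (if j = c then (U.m c : ℝ) else 0)) + (b + (if c = c then (U.m c : ℝ) else 0))))
      = (b / S) * (a / (a + (b + (U.m c : ℝ)))) := by
    rw [if_neg hjc, if_pos rfl, add_zero]
  rw [hterm_j, hterm_c]
  have hrest : ∑ i ∈ (Finset.univ.erase j).erase c, ((U.X n i ω : ℝ) / S) *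
      ((a + (if j = i then (U.m i : ℝ) else 0)) /
        ((a + (if j = i then (U.m i : ℝ) else 0)) + (b + (if c = i then (U.m i : ℝ) else 0))))
      = ((S - a - b)/S) * (a/(a+b)) := by
    have h1 : ∀ i ∈ (Finset.univ.erase j).erase c, ((U.X n i ω : ℝ) / S) *
        ((a + (if j = i then (U.m i : ℝ) else 0)) /
          ((a + (if j = i then (U.m i : ℝ) else 0)) + (b + (if c = i then (U.m i : ℝ) else 0))))
        = (U.X n i ω : ℝ) * ((a/(a+b))/S) := by
      intro i hi
      have hic : c ≠ i := fun h => (Finset.mem_erase.1 hi).1 h.symm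
      have hij : j ≠ i := fun h => (Finset.mem_erase.1 (Finset.mem_erase.1 hi).2).1 h.symm
      rw [if_neg hij, if_neg hic, add_zero, add_zero]
      ring
    rw [Finset.sum_congr rfl h1, ← Finset.sum_mul]
    have h2 : ∑ i ∈ (Finset.univ.erase j).erase c, (U.X n i ω : ℝ) = S - a - b := by
      rw [Finset.sum_erase_eq_sub hcu, Finset.sum_erase_eq_sub (Finset.mem_univ j), ← hS, ← ha, ← hb]
    rw [h2]
    ring
  rw [hrest]
  have hSsum : a + b ≤ S := by
    have := Finset.add_sum_erase Finset.univ (fun i => (U.X n i ω : ℝ)) (Finset.mem_univ j)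
    have h2 := Finset.add_sum_erase (Finset.univ.erase j) (fun i => (U.X n i ω : ℝ)) hcu
    have h3 : 0 ≤ ∑ i ∈ (Finset.univ.erase j).erase c, (U.X n i ω : ℝ) :=
      Finset.sum_nonneg fun i _ => by positivity
    rw [hS, ← this, ← h2]
    linarith
  have hmj : (0:ℝ) < (U.m j : ℝ) := by exact_mod_cast U.m_pos j
  have hmm : (U.m j : ℝ) ≤ (U.m c : ℝ) := by exact_mod_cast hm j
  linarith [drift_real a b S (U.m j : ℝ) (U.m c : ℝ) (by linarith [hge' j]) (by linarith [hge' c]) hSsum hmj hmm]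


lemma measD {k n : ℕ} (h : k + 1 ≤ n) (i : Fin q) :
    MeasurableSet[U.𝓕 n] {ω | U.X (k+1) i ω = U.X k i ω + U.m i} :=
  measurableSet_rel (measX_filt U h i) (measX_filt U (by omega) i) (fun s t => s = t + U.m i)

lemma measD' {k : ℕ} (i : Fin q) :
    MeasurableSet {ω | U.X (k+1) i ω = U.X k i ω + U.m i} :=
  measurableSet_rel (U.measX (k+1) i) (U.measX k i) (fun s t => s = t + U.m i)

/-- pull-out lemma: replacing the draw indicator by its conditional probability -/
lemma pull (n : ℕ) (i : Fin q) (f : Ω → ℝ) (hf : StronglyMeasurable[U.𝓕 n] f)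
    (Cb : ℝ) (hbdd : ∀ ω, ‖f ω‖ ≤ Cb) :
    ∫ ω, f ω * (if U.X (n+1) i ω = U.X n i ω + U.m i then (1:ℝ) else 0) ∂U.μ
      = ∫ ω, f ω * ((U.X n i ω : ℝ) / (∑ j : Fin q, (U.X n j ω : ℝ))) ∂U.μ := by
  haveI := U.isProb
  set g : Ω → ℝ := fun ω => if U.X (n+1) i ω = U.X n i ω + U.m i then (1:ℝ) else 0 with hgdef
  have hgind : g = Set.indicator {ω | U.X (n+1) i ω = U.X n i ω + U.m i} (fun _ => (1:ℝ)) := by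
    funext ω
    simp [hgdef, Set.indicator_apply, Set.mem_setOf_eq]
  have hg : Integrable g U.μ := by
    rw [hgind]
    exact (integrable_const (1:ℝ)).indicator (measD' U i)
  have hfg : Integrable (f * g) U.μ := hg.bdd_mul (c := Cb)
    (hf.mono (U.𝓕.le n)).aestronglyMeasurable (Eventually.of_forall hbdd)
  have h1 : ∫ ω, (f * g) ω ∂U.μ = ∫ ω, (U.μ[f * g | U.𝓕 n]) ω ∂U.μ :=
    (integral_condExp (U.𝓕.le n)).symm
  have h2 : U.μ[f * g | U.𝓕 n] =ᵐ[U.μ] f * U.μ[g | U.𝓕 n] :=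
    condExp_mul_of_stronglyMeasurable_left hf hfg hg
  have h3 : U.μ[g | U.𝓕 n] =ᵐ[U.μ]
      fun ω => (U.X n i ω : ℝ) / (∑ j : Fin q, (U.X n j ω : ℝ)) := U.hcond n i
  calc ∫ ω, f ω * g ω ∂U.μ = ∫ ω, (f * g) ω ∂U.μ := rfl
    _ = ∫ ω, (U.μ[f * g | U.𝓕 n]) ω ∂U.μ := h1
    _ = ∫ ω, (f * U.μ[g | U.𝓕 n]) ω ∂U.μ := integral_congr_ae h2
    _ = ∫ ω, f ω * ((U.X n i ω : ℝ) / (∑ j : Fin q, (U.X n j ω : ℝ))) ∂U.μ := by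
        refine integral_congr_ae ?_
        filter_upwards [h3] with ω hω
        simp only [Pi.mul_apply, hω]

/-- the supermartingale step for the stopped weight process -/
lemma superm (c : Fin q) (hm : ∀ j, U.m j ≤ U.m c) (hpos : ∀ j ω, 1 ≤ U.X 0 j ω)
    (n : ℕ) (C : Set Ω) (hC : MeasurableSet[U.𝓕 n] C) :
    ∫ ω, Set.indicator C (W U c (n+1)) ω ∂U.μ ≤ ∫ ω, Set.indicator C (W U c n) ω ∂U.μ := by
  haveI := U.isProb
  have hC' : MeasurableSet C := U.𝓕.le n C hC
  have hq0 : (0:ℝ) ≤ q := Nat.cast_nonneg q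
  -- pointwise decomposition
  have hdec : ∀ ω, Set.indicator C (W U c (n+1)) ω
      = ∑ i : Fin q, Set.indicator C (WA U c i n) ω *
          (if U.X (n+1) i ω = U.X n i ω + U.m i then (1:ℝ) else 0) := by
    intro ω
    by_cases h : ω ∈ C
    · rw [Set.indicator_of_mem h, decomp U c n ω]
      exact Finset.sum_congr rfl fun i _ => by rw [Set.indicator_of_mem h]
    · rw [Set.indicator_of_notMem h]
      refine (Finset.sum_eq_zero fun i _ => ?_).symm
      rw [Set.indicator_of_notMem h, zero_mul]
  have hWAbd : ∀ i ω, ‖Set.indicator C (WA U c i n) ω‖ ≤ q := by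
    intro i ω
    rw [Real.norm_eq_abs, abs_le]
    by_cases h : ω ∈ C
    · rw [Set.indicator_of_mem h]
      exact ⟨by linarith [WA_nonneg U c i n ω], WA_le U c i n ω⟩
    · rw [Set.indicator_of_notMem h]
      constructor <;> linarith
  have hWAm : ∀ i, Measurable (fun ω => Set.indicator C (WA U c i n) ω) :=
    fun i => (WA_meas U c i n).indicator hC'
  have hintL : ∀ i : Fin q, Integrable (fun ω => Set.indicator C (WA U c i n) ω *
      (if U.X (n+1) i ω = U.X n i ω + U.m i then (1:ℝ) else 0)) U.μ := by
    intro i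
    refine integrable_of_bdd U ?_ q ?_
    · refine (hWAm i).mul ?_
      have : (fun ω => if U.X (n+1) i ω = U.X n i ω + U.m i then (1:ℝ) else 0)
          = Set.indicator {ω | U.X (n+1) i ω = U.X n i ω + U.m i} (fun _ => (1:ℝ)) := by
        funext ω; simp [Set.indicator_apply, Set.mem_setOf_eq]
      rw [this]
      exact measurable_const.indicator (measD' U i)
    · intro ω
      rw [abs_mul]
      rcases le_or_gt (|Set.indicator C (WA U c i n) ω|) q with h | h
      · calc |Set.indicator C (WA U c i n) ω| * |if U.X (n+1) i ω = U.X n i ω + U.m i then (1:ℝ) else 0|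
            ≤ |Set.indicator C (WA U c i n) ω| * 1 := by
              gcongr
              split <;> simp
          _ ≤ q := by rw [mul_one]; exact h
      · exact absurd (hWAbd i ω) (by rw [Real.norm_eq_abs]; linarith)
  have hintR : ∀ i : Fin q, Integrable (fun ω => Set.indicator C (WA U c i n) ω *
      ((U.X n i ω : ℝ) / (∑ j : Fin q, (U.X n j ω : ℝ)))) U.μ := by
    intro i
    have hp : ∀ ω, 0 ≤ (U.X n i ω : ℝ) / (∑ j : Fin q, (U.X n j ω : ℝ)) := by
      intro ω; positivity
    have hp1 : ∀ ω, (U.X n i ω : ℝ) / (∑ j : Fin q, (U.X n j ω : ℝ)) ≤ 1 := by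
      intro ω
      rcases eq_or_lt_of_le (Finset.sum_nonneg fun j _ => by positivity :
        (0:ℝ) ≤ ∑ j : Fin q, (U.X n j ω : ℝ)) with h | h
      · rw [← h, div_zero]; norm_num
      · rw [div_le_one h]
        exact Finset.single_le_sum (f := fun j => (U.X n j ω : ℝ)) (fun j _ => by positivity) (Finset.mem_univ i)
    refine integrable_of_bdd U ?_ q ?_
    · exact (hWAm i).mul ((cast_meas (U.measX n i)).div
        (Finset.measurable_sum _ fun j _ => cast_meas (U.measX n j)))
    · intro ω
      rw [abs_mul]
      calc |Set.indicator C (WA U c i n) ω| * |(U.X n i ω : ℝ) / (∑ j : Fin q, (U.X n j ω : ℝ))|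
          ≤ q * 1 := by
            refine mul_le_mul ?_ ?_ (abs_nonneg _) hq0
            · rw [← Real.norm_eq_abs]; exact hWAbd i ω
            · rw [abs_of_nonneg (hp ω)]; exact hp1 ω
        _ = q := mul_one _
  calc ∫ ω, Set.indicator C (W U c (n+1)) ω ∂U.μ
      = ∫ ω, ∑ i : Fin q, Set.indicator C (WA U c i n) ω *
          (if U.X (n+1) i ω = U.X n i ω + U.m i then (1:ℝ) else 0) ∂U.μ :=
        integral_congr_ae (Eventually.of_forall hdec)
    _ = ∑ i : Fin q, ∫ ω, Set.indicator C (WA U c i n) ω *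
          (if U.X (n+1) i ω = U.X n i ω + U.m i then (1:ℝ) else 0) ∂U.μ :=
        integral_finset_sum _ fun i _ => hintL i
    _ = ∑ i : Fin q, ∫ ω, Set.indicator C (WA U c i n) ω *
          ((U.X n i ω : ℝ) / (∑ j : Fin q, (U.X n j ω : ℝ))) ∂U.μ := by
        refine Finset.sum_congr rfl fun i _ => ?_
        exact pull U n i _ ((WA_meas_filt U c i n).indicator hC).stronglyMeasurable
          q (hWAbd i)
    _ = ∫ ω, ∑ i : Fin q, Set.indicator C (WA U c i n) ω *
          ((U.X n i ω : ℝ) / (∑ j : Fin q, (U.X n j ω : ℝ))) ∂U.μ :=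
        (integral_finset_sum _ fun i _ => hintR i).symm
    _ ≤ ∫ ω, Set.indicator C (W U c n) ω ∂U.μ := by
        refine integral_mono (integrable_finset_sum _ fun i _ => hintR i) ?_ ?_
        · refine integrable_of_bdd U ((W_meas U c n).indicator hC') q ?_
          intro ω
          rw [abs_le]
          by_cases h : ω ∈ C
          · rw [Set.indicator_of_mem h]
            exact ⟨by linarith [W_nonneg U c n ω], W_le U c n ω⟩
          · rw [Set.indicator_of_notMem h]; constructor <;> linarith
        · intro ω
          by_cases h : ω ∈ C
          · simp only [Set.indicator_of_mem h]
            exact drift_pt U c hm hpos n ω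
          · simp only [Set.indicator_of_notMem h, zero_mul]
            simp


lemma W_half (c : Fin q) (hpos : ∀ j ω, 1 ≤ U.X 0 j ω) (k : ℕ) (ω : Ω) (j : Fin q)
    (hj : j ≠ c) (h : U.X k c ω ≤ U.X k j ω) : (1:ℝ)/2 ≤ W U c k ω := by
  have hb : 1 ≤ U.X k c ω := le_trans (hpos c ω) (mono U 0 k (Nat.zero_le k) c ω)
  have hb' : (1:ℝ) ≤ (U.X k c ω : ℝ) := by exact_mod_cast hb
  have hab : (U.X k c ω : ℝ) ≤ (U.X k j ω : ℝ) := by exact_mod_cast h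
  set a : ℝ := (U.X k j ω : ℝ) with hadef
  set b : ℝ := (U.X k c ω : ℝ) with hbdef
  have hterm : (1:ℝ)/2 ≤ a / (a + b) := by
    rw [div_le_div_iff₀ (by norm_num) (by linarith)]
    linarith
  calc (1:ℝ)/2 ≤ a / (a + b) := hterm
    _ ≤ W U c k ω := Finset.single_le_sum
        (f := fun j' => (U.X k j' ω : ℝ) / ((U.X k j' ω : ℝ) + b))
        (fun j' _ => frac_nonneg (by positivity) (by positivity))
        (Finset.mem_erase.2 ⟨hj, Finset.mem_univ j⟩)

end PolyaAux

open PolyaAux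

/-- In the `q`-colour unfair Pólya urn where colour `c` satisfies `m c ≥ m j` for all `j`,
if initially colour `c` holds a plurality (strictly more balls than each other colour
individually), then with positive probability colour `c` holds a plurality at every
time `n ≥ 0`. -/
theorem stmt14 {q : ℕ} {Ω : Type*} [MeasurableSpace Ω] (U : PolyaUrnQ q Ω)
    (hq : 2 ≤ q) (c : Fin q) (hm : ∀ j, U.m j ≤ U.m c)
    (hinit : ∀ j ω, 1 ≤ U.X 0 j ω)
    (hplur : ∀ ω, ∀ j, j ≠ c → U.X 0 j ω < U.X 0 c ω) :
    0 < U.μ {ω | ∀ n, ∀ j, j ≠ c → U.X n j ω < U.X n c ω} := by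
  classical
  haveI := U.isProb
  -- choose an initial configuration of positive probability
  have hfib : ∃ v : Fin q → ℕ, 0 < U.μ {ω | ∀ j, U.X 0 j ω = v j} := by
    by_contra h
    push_neg at h
    have h0 : ∀ v : Fin q → ℕ, U.μ {ω | ∀ j, U.X 0 j ω = v j} = 0 :=
      fun v => le_antisymm (h v) (zero_le)
    have huniv : (Set.univ : Set Ω) ⊆ ⋃ v : Fin q → ℕ, {ω | ∀ j, U.X 0 j ω = v j} := by
      intro ω _
      exact Set.mem_iUnion.2 ⟨fun j => U.X 0 j ω, fun j => rfl⟩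
    have h1 : U.μ Set.univ = 0 :=
      le_antisymm (le_trans (measure_mono huniv) (le_of_eq (measure_iUnion_null h0))) (zero_le)
    rw [measure_univ] at h1
    norm_num at h1
  obtain ⟨v, hv⟩ := hfib
  set B : Set Ω := {ω | ∀ j, U.X 0 j ω = v j} with hBdef
  obtain ⟨ω0, hω0⟩ := nonempty_of_measure_ne_zero hv.ne'
  have hω0' : ∀ j, U.X 0 j ω0 = v j := hω0
  have hv1 : ∀ j, 1 ≤ v j := fun j => by rw [← hω0' j]; exact hinit j ω0
  have hvlt : ∀ j, j ≠ c → v j < v c := fun j hj => by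
    have := hplur ω0 j hj
    rwa [hω0' j, hω0' c] at this
  set N : ℕ := 4 * (∑ j, v j) + 1 with hN
  -- the sets of forced draws of colour c
  set D : ℕ → Set Ω := fun k => {ω | U.X (k+1) c ω = U.X k c ω + U.m c} with hD
  set A : ℕ → Set Ω := fun k => B ∩ ⋂ l ∈ Finset.range k, D l with hA
  have hAsub : ∀ k ω, ω ∈ A k → ω ∈ B ∧ ∀ l, l < k → ω ∈ D l := by
    intro k ω hω
    refine ⟨hω.1, fun l hl => ?_⟩
    have h2 := hω.2
    simp only [Set.mem_iInter] at h2
    exact h2 l (Finset.mem_range.2 hl)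
  have hAval : ∀ k, ∀ ω ∈ A k, ∀ l, l ≤ k → ∀ j,
      U.X l j ω = v j + (if j = c then l * U.m c else 0) := by
    intro k ω hω
    obtain ⟨hB, hDl⟩ := hAsub k ω hω
    intro l
    induction l with
    | zero => intro _ j; simp [hB j]
    | succ l ih =>
      intro hlk j
      have hmem : U.X (l+1) c ω = U.X l c ω + U.m c := hDl l (by omega)
      have h1 := draw_unique U hmem j
      rw [h1, ih (by omega) j]
      rcases eq_or_ne j c with h | h
      · subst h; simp [Nat.succ_mul, Nat.add_assoc]
      · simp [h]
  have hAmeas : ∀ k, MeasurableSet[U.𝓕 k] (A k) := by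
    intro k
    refine MeasurableSet.inter ?_ ?_
    · have hB0 : MeasurableSet[U.𝓕 0] B := by
        have hBeq : B = ⋂ j : Fin q, {ω | U.X 0 j ω = v j} := by
          ext ω; simp [hBdef]
        rw [hBeq]
        exact MeasurableSet.iInter fun j =>
          measurableSet_rel (measX_filt U le_rfl j) (measX_filt U le_rfl j)
            (fun s _ => s = v j)
      exact (U.𝓕.mono (Nat.zero_le k)) _ hB0
    · exact MeasurableSet.iInter fun l => MeasurableSet.iInter fun hl =>
        measD U (Finset.mem_range.1 hl) c
  have hApos : ∀ k, 0 < U.μ (A k) := by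
    intro k
    induction k with
    | zero =>
      have : A 0 = B := by simp [hA]
      rw [this]; exact hv
    | succ k ih =>
      have hsplit : A (k+1) = A k ∩ D k := by
        ext ω
        simp only [hA, Set.mem_inter_iff, Set.mem_iInter, Finset.mem_range]
        constructor
        · rintro ⟨hB, h2⟩
          exact ⟨⟨hB, fun l hl => h2 l (by omega)⟩, h2 k (by omega)⟩
        · rintro ⟨⟨hB, h2⟩, h3⟩
          refine ⟨hB, fun l hl => ?_⟩
          rcases Nat.lt_or_ge l k with h' | h'
          · exact h2 l h'
          · have : l = k := by omega
            subst this; exact h3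
      have hmeasA : MeasurableSet (A k) := U.𝓕.le k _ (hAmeas k)
      have hindm : StronglyMeasurable[U.𝓕 k] (Set.indicator (A k) (fun _ => (1:ℝ))) :=
        stronglyMeasurable_const.indicator (hAmeas k)
      have hbd : ∀ ω, ‖Set.indicator (A k) (fun _ => (1:ℝ)) ω‖ ≤ 1 := by
        intro ω
        by_cases h : ω ∈ A k <;> simp [Set.indicator_apply, h]
      have hpull := pull U k c _ hindm 1 hbd
      have hLHS : ∫ ω, Set.indicator (A k) (fun _ => (1:ℝ)) ω *
          (if U.X (k+1) c ω = U.X k c ω + U.m c then (1:ℝ) else 0) ∂U.μ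
          = (U.μ (A k ∩ D k)).toReal := by
        have hpt : ∀ ω, Set.indicator (A k) (fun _ => (1:ℝ)) ω *
            (if U.X (k+1) c ω = U.X k c ω + U.m c then (1:ℝ) else 0)
            = Set.indicator (A k ∩ D k) (fun _ => (1:ℝ)) ω := by
          intro ω
          have hDiff : (U.X (k+1) c ω = U.X k c ω + U.m c) ↔ ω ∈ D k := Iff.rfl
          by_cases h1 : ω ∈ A k <;> by_cases h2 : ω ∈ D k
          · rw [Set.indicator_of_mem h1, Set.indicator_of_mem (Set.mem_inter h1 h2), if_pos (hDiff.2 h2), one_mul]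
          · rw [Set.indicator_of_mem h1, Set.indicator_of_notMem (fun h => h2 h.2),
              if_neg (fun h => h2 (hDiff.1 h)), one_mul]
          · rw [Set.indicator_of_notMem h1, Set.indicator_of_notMem (fun h => h1 h.1), zero_mul]
          · rw [Set.indicator_of_notMem h1, Set.indicator_of_notMem (fun h => h1 h.1), zero_mul]
        rw [integral_congr_ae (Eventually.of_forall hpt),
          integral_indicator_const (1:ℝ) (hmeasA.inter (measD' U c))]
        simp [Measure.real, hD]
      have hRHS : ∫ ω, Set.indicator (A k) (fun _ => (1:ℝ)) ω *
          ((U.X k c ω : ℝ) / (∑ j : Fin q, (U.X k j ω : ℝ))) ∂U.μ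
          = (((v c : ℝ) + k * U.m c) / ((∑ j, (v j : ℝ)) + k * U.m c)) * (U.μ (A k)).toReal := by
        have hpt : ∀ ω, Set.indicator (A k) (fun _ => (1:ℝ)) ω *
            ((U.X k c ω : ℝ) / (∑ j : Fin q, (U.X k j ω : ℝ)))
            = Set.indicator (A k)
                (fun _ => ((v c : ℝ) + k * U.m c) / ((∑ j, (v j : ℝ)) + k * U.m c)) ω := by
          intro ω
          by_cases h1 : ω ∈ A k
          · rw [Set.indicator_of_mem h1, Set.indicator_of_mem h1, one_mul]
            have hval := hAval k ω h1 k le_rfl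
            have hXc : (U.X k c ω : ℝ) = (v c : ℝ) + k * U.m c := by
              rw [hval c, if_pos rfl]; push_cast; ring
            have hS : (∑ j : Fin q, (U.X k j ω : ℝ)) = (∑ j, (v j : ℝ)) + k * U.m c := by
              calc (∑ j : Fin q, (U.X k j ω : ℝ))
                  = ∑ j : Fin q, ((v j : ℝ) + (if j = c then (k * U.m c : ℝ) else 0)) := by
                    refine Finset.sum_congr rfl fun j _ => ?_
                    rw [hval j]
                    rcases eq_or_ne j c with h | h
                    · rw [if_pos h, if_pos h]; push_cast; ring
                    · rw [if_neg h, if_neg h]; push_cast; ring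
                _ = (∑ j, (v j : ℝ)) + k * U.m c := by
                    rw [Finset.sum_add_distrib, Finset.sum_ite_eq' Finset.univ c]
                    simp
            rw [hXc, hS]
          · rw [Set.indicator_of_notMem h1, Set.indicator_of_notMem h1, zero_mul]
        rw [integral_congr_ae (Eventually.of_forall hpt), integral_indicator_const _ hmeasA]
        simp [mul_comm, Measure.real]
      have hpk : 0 < ((v c : ℝ) + k * U.m c) / ((∑ j, (v j : ℝ)) + k * U.m c) := by
        have h1 : (0:ℝ) < (v c : ℝ) := by exact_mod_cast hv1 c
        have h3 : (v c : ℝ) ≤ ∑ j, (v j : ℝ) :=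
          Finset.single_le_sum (f := fun j => (v j : ℝ)) (fun j _ => by positivity)
            (Finset.mem_univ c)
        have h4 : (0:ℝ) ≤ (k : ℝ) * U.m c := by positivity
        apply div_pos <;> linarith
      have htr : 0 < (U.μ (A k ∩ D k)).toReal := by
        rw [← hLHS, hpull, hRHS]
        have h5 : 0 < (U.μ (A k)).toReal := ENNReal.toReal_pos ih.ne' (measure_ne_top _ _)
        exact mul_pos hpk h5
      rw [hsplit]
      exact pos_iff_ne_zero.2 (fun h0 => by simp [h0] at htr)
  -- the good sets
  set G : ℕ → Set Ω := fun n => {ω | ∀ k, k ≤ n → ∀ j, j ≠ c → U.X k j ω < U.X k c ω} with hG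
  have hGanti : ∀ {a b : ℕ}, a ≤ b → G b ⊆ G a :=
    fun hab ω hω k hk j hj => hω k (le_trans hk hab) j hj
  have hGmeas_filt : ∀ n, MeasurableSet[U.𝓕 n] (G n) := by
    intro n
    have hGeq : G n = ⋂ (k : ℕ), ⋂ (_ : k ≤ n), ⋂ (j : Fin q), ⋂ (_ : j ≠ c),
        {ω | U.X k j ω < U.X k c ω} := by
      ext ω; simp [hG]
    rw [hGeq]
    exact MeasurableSet.iInter fun k => MeasurableSet.iInter fun hk =>
      MeasurableSet.iInter fun j => MeasurableSet.iInter fun _ =>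
        measurableSet_rel (measX_filt U hk j) (measX_filt U hk c) (· < ·)
  have hGmeas : ∀ n, MeasurableSet (G n) := fun n => U.𝓕.le n _ (hGmeas_filt n)
  -- the stopped weight process
  set Wst : ℕ → Ω → ℝ := fun n => Nat.rec (W U c 0)
    (fun k ih ω => if ω ∈ G k then W U c (k+1) ω else ih ω) n with hWstdef
  have hWst0 : ∀ ω, Wst 0 ω = W U c 0 ω := fun ω => rfl
  have hWstS : ∀ k ω, Wst (k+1) ω = if ω ∈ G k then W U c (k+1) ω else Wst k ω :=
    fun k ω => rfl
  have hWst_nonneg : ∀ n ω, 0 ≤ Wst n ω := by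
    intro n
    induction n with
    | zero => intro ω; rw [hWst0]; exact W_nonneg U c 0 ω
    | succ k ih =>
      intro ω; rw [hWstS]
      split
      · exact W_nonneg U c (k+1) ω
      · exact ih ω
  have hWst_le : ∀ n ω, |Wst n ω| ≤ (q:ℝ) := by
    intro n
    induction n with
    | zero =>
      intro ω; rw [hWst0, abs_le]
      exact ⟨by linarith [W_nonneg U c 0 ω], W_le U c 0 ω⟩
    | succ k ih =>
      intro ω; rw [hWstS]
      split
      · rw [abs_le]; exact ⟨by linarith [W_nonneg U c (k+1) ω], W_le U c (k+1) ω⟩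
      · exact ih ω
  have hWst_meas : ∀ n, Measurable (Wst n) := by
    intro n
    induction n with
    | zero => exact W_meas U c 0
    | succ k ih => exact Measurable.ite (hGmeas k) (W_meas U c (k+1)) ih
  have hWst_eqW : ∀ n ω, (∀ k, k < n → ω ∈ G k) → Wst n ω = W U c n ω := by
    intro n
    induction n with
    | zero => intro ω _; exact hWst0 ω
    | succ k _ => intro ω h; rw [hWstS, if_pos (h k (by omega))]
  have hWst_half : ∀ n ω, ω ∉ G n → (1:ℝ)/2 ≤ Wst (n+1) ω := by
    intro n
    induction n with
    | zero =>
      intro ω hω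
      rw [hWstS, if_neg hω, hWst0]
      simp only [hG, Set.mem_setOf_eq] at hω
      push_neg at hω
      obtain ⟨k, hk, j, hj, hge⟩ := hω
      have hk0 : k = 0 := by omega
      subst hk0
      exact W_half U c hinit 0 ω j hj hge
    | succ n ihn =>
      intro ω hω
      rw [hWstS, if_neg hω]
      by_cases hgn : ω ∈ G n
      · rw [hWstS, if_pos hgn]
        simp only [hG, Set.mem_setOf_eq] at hω
        push_neg at hω
        obtain ⟨k, hk, j, hj, hge⟩ := hω
        have hk1 : k = n + 1 := by
          by_contra hne
          have hkn : k ≤ n := by omega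
          exact absurd (hgn k hkn j hj) (by omega)
        subst hk1
        exact W_half U c hinit (n+1) ω j hj hge
      · exact ihn ω hgn
  -- the integral of the stopped process over A N
  have hANmeas : MeasurableSet (A N) := U.𝓕.le N _ (hAmeas N)
  set I : ℕ → ℝ := fun n => ∫ ω, Set.indicator (A N) (Wst n) ω ∂U.μ with hI
  have hIint : ∀ n, Integrable (Set.indicator (A N) (Wst n)) U.μ := by
    intro n
    refine integrable_of_bdd U ((hWst_meas n).indicator hANmeas) q ?_
    intro ω
    by_cases h : ω ∈ A N
    · rw [Set.indicator_of_mem h]; exact hWst_le n ω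
    · rw [Set.indicator_of_notMem h]; simp
  have hWint : ∀ (C : Set Ω) (_ : MeasurableSet C) (k : ℕ),
      Integrable (Set.indicator C (W U c k)) U.μ := by
    intro C hC k
    refine integrable_of_bdd U ((W_meas U c k).indicator hC) q ?_
    intro ω
    by_cases h : ω ∈ C
    · rw [Set.indicator_of_mem h, abs_le]
      exact ⟨by linarith [W_nonneg U c k ω], W_le U c k ω⟩
    · rw [Set.indicator_of_notMem h]; simp
  have hIdec : ∀ n, N ≤ n → I (n+1) ≤ I n := by
    intro n hn
    have hC : MeasurableSet[U.𝓕 n] (A N ∩ G n) :=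
      ((U.𝓕.mono hn) _ (hAmeas N)).inter (hGmeas_filt n)
    have hC' : MeasurableSet (A N ∩ G n) := U.𝓕.le n _ hC
    have hsup := superm U c hm hinit n (A N ∩ G n) hC
    have hpt : ∀ ω, Set.indicator (A N) (Wst (n+1)) ω
        = Set.indicator (A N) (Wst n) ω
          + (Set.indicator (A N ∩ G n) (W U c (n+1)) ω
            - Set.indicator (A N ∩ G n) (W U c n) ω) := by
      intro ω
      by_cases hA1 : ω ∈ A N
      · by_cases hGn : ω ∈ G n
        · have hmem : ω ∈ A N ∩ G n := ⟨hA1, hGn⟩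
          rw [Set.indicator_of_mem hA1, Set.indicator_of_mem hA1,
            Set.indicator_of_mem hmem, Set.indicator_of_mem hmem, hWstS, if_pos hGn]
          have h1 : Wst n ω = W U c n ω :=
            hWst_eqW n ω (fun k hk => hGanti (by omega) hGn)
          rw [h1]; ring
        · have hmem : ω ∉ A N ∩ G n := fun h => hGn h.2
          rw [Set.indicator_of_mem hA1, Set.indicator_of_mem hA1,
            Set.indicator_of_notMem hmem, Set.indicator_of_notMem hmem, hWstS, if_neg hGn]
          ring
      · have hmem : ω ∉ A N ∩ G n := fun h => hA1 h.1
        rw [Set.indicator_of_notMem hA1, Set.indicator_of_notMem hA1,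
          Set.indicator_of_notMem hmem, Set.indicator_of_notMem hmem]
        ring
    have h1 : I (n+1) = I n + (∫ ω, Set.indicator (A N ∩ G n) (W U c (n+1)) ω ∂U.μ
        - ∫ ω, Set.indicator (A N ∩ G n) (W U c n) ω ∂U.μ) := by
      have hInt2 : Integrable (fun ω => Set.indicator (A N ∩ G n) (W U c (n+1)) ω
          - Set.indicator (A N ∩ G n) (W U c n) ω) U.μ :=
        (hWint _ hC' (n+1)).sub (hWint _ hC' n)
      simp only [hI]
      rw [integral_congr_ae (Eventually.of_forall hpt), integral_add (hIint n) hInt2,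
        integral_sub (hWint _ hC' (n+1)) (hWint _ hC' n)]
    rw [h1]
    linarith [hsup]
  have hINle : ∀ n, N ≤ n → I n ≤ I N := by
    intro n hn
    induction n, hn using Nat.le_induction with
    | base => exact le_refl _
    | succ n hn ih => exact le_trans (hIdec n hn) ih
  -- A N is contained in every G k for k ≤ N
  have hANG : ∀ k, k ≤ N → A N ⊆ G k := by
    intro k hk ω hω l hl j hj
    rw [hAval N ω hω l (le_trans hl hk) j, hAval N ω hω l (le_trans hl hk) c,
      if_neg hj, if_pos rfl]
    have := hvlt j hj
    omega
  set r : ℝ := ∑ j ∈ Finset.univ.erase c,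
    (v j : ℝ) / ((v j : ℝ) + ((v c : ℝ) + N * U.m c)) with hr
  have hIN_val : I N = r * (U.μ (A N)).toReal := by
    have hpt : ∀ ω, Set.indicator (A N) (Wst N) ω = Set.indicator (A N) (fun _ => r) ω := by
      intro ω
      by_cases h : ω ∈ A N
      · rw [Set.indicator_of_mem h, Set.indicator_of_mem h,
          hWst_eqW N ω (fun k hk => hANG k (by omega) h)]
        have hvalj : ∀ j, j ≠ c → (U.X N j ω : ℝ) = (v j : ℝ) := fun j hj => by
          rw [hAval N ω h N le_rfl j, if_neg hj]; push_cast; ring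
        have hvalc : (U.X N c ω : ℝ) = (v c : ℝ) + N * U.m c := by
          rw [hAval N ω h N le_rfl c, if_pos rfl]; push_cast; ring
        rw [hr]
        unfold PolyaAux.W
        refine Finset.sum_congr rfl fun j hj => ?_
        rw [hvalj j (Finset.ne_of_mem_erase hj), hvalc]
      · rw [Set.indicator_of_notMem h, Set.indicator_of_notMem h]
    simp only [hI]
    rw [integral_congr_ae (Eventually.of_forall hpt), integral_indicator_const _ hANmeas]
    simp [mul_comm, Measure.real]
  have hrle : r ≤ 1/4 := by
    have hN0 : (0:ℝ) < N := by
      have h1 : (0:ℕ) < N := by omega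
      exact_mod_cast h1
    have hterm : ∀ j ∈ Finset.univ.erase c,
        (v j : ℝ) / ((v j : ℝ) + ((v c : ℝ) + N * U.m c)) ≤ (v j : ℝ) / N := by
      intro j _
      have hden : (N:ℝ) ≤ (v j : ℝ) + ((v c : ℝ) + N * U.m c) := by
        have h1 : (1:ℝ) ≤ (v c : ℝ) := by exact_mod_cast hv1 c
        have h2 : (N:ℝ) * 1 ≤ (N:ℝ) * U.m c := by
          have h3 : (1:ℕ) ≤ U.m c := U.m_pos c
          have h3' : (1:ℝ) ≤ (U.m c : ℝ) := by exact_mod_cast h3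
          nlinarith
        have h4 : (0:ℝ) ≤ (v j : ℝ) := by positivity
        linarith
      exact div_le_div_of_nonneg_left (by positivity) hN0 hden
    have hcast : ((∑ j, v j : ℕ) : ℝ) = ∑ j, (v j : ℝ) := by push_cast; rfl
    calc r ≤ ∑ j ∈ Finset.univ.erase c, (v j : ℝ)/N := Finset.sum_le_sum hterm
      _ ≤ ∑ j : Fin q, (v j : ℝ)/N := Finset.sum_le_sum_of_subset_of_nonneg
          (Finset.erase_subset _ _) (fun j _ _ => by positivity)
      _ = (∑ j, (v j : ℝ))/N := by rw [Finset.sum_div]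
      _ ≤ 1/4 := by
          rw [div_le_div_iff₀ hN0 (by norm_num)]
          have hNval : (N:ℝ) = 4 * (∑ j, (v j : ℝ)) + 1 := by
            rw [hN]; push_cast; ring
          have h0 : 0 ≤ (∑ j, (v j : ℝ)) := by positivity
          rw [hNval]; ring_nf; linarith
  have hμAr : 0 < (U.μ (A N)).toReal := ENNReal.toReal_pos (hApos N).ne' (measure_ne_top _ _)
  have hbound : ∀ n, N ≤ n → (U.μ (A N ∩ (G n)ᶜ)).toReal ≤ 1/2 * (U.μ (A N)).toReal := by
    intro n hn
    have hmeasAG : MeasurableSet (A N ∩ (G n)ᶜ) := hANmeas.inter (hGmeas n).compl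
    have hptle : ∀ ω, Set.indicator (A N ∩ (G n)ᶜ) (fun _ => (1:ℝ)/2) ω
        ≤ Set.indicator (A N) (Wst (n+1)) ω := by
      intro ω
      by_cases h : ω ∈ A N ∩ (G n)ᶜ
      · rw [Set.indicator_of_mem h, Set.indicator_of_mem h.1]
        exact hWst_half n ω h.2
      · rw [Set.indicator_of_notMem h]
        exact Set.indicator_nonneg (fun ω' _ => hWst_nonneg (n+1) ω') ω
    have hlow : (U.μ (A N ∩ (G n)ᶜ)).toReal * (1/2) ≤ I (n+1) := by
      have hii : Integrable (Set.indicator (A N ∩ (G n)ᶜ) (fun _ => (1:ℝ)/2)) U.μ :=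
        (integrable_const _).indicator hmeasAG
      have hmono3 := integral_mono hii (hIint (n+1)) hptle
      rwa [integral_indicator_const _ hmeasAG, smul_eq_mul] at hmono3
    have hup : I (n+1) ≤ r * (U.μ (A N)).toReal := by
      rw [← hIN_val]; exact hINle (n+1) (by omega)
    have h4 : r * (U.μ (A N)).toReal ≤ 1/4 * (U.μ (A N)).toReal :=
      mul_le_mul_of_nonneg_right hrle hμAr.le
    linarith
  set E : Set Ω := {ω | ∀ n, ∀ j, j ≠ c → U.X n j ω < U.X n c ω} with hE
  have hsub : (A N) \ E ⊆ ⋃ n : ℕ, (A N ∩ (G (N+n))ᶜ) := by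
    rintro ω ⟨hA1, hE1⟩
    simp only [hE, Set.mem_setOf_eq] at hE1
    push_neg at hE1
    obtain ⟨n, j, hj, hge⟩ := hE1
    refine Set.mem_iUnion.2 ⟨n, hA1, ?_⟩
    intro hGmem
    exact absurd (hGmem n (by omega) j hj) (by omega)
  have hmono2 : Monotone fun n : ℕ => (A N ∩ (G (N+n))ᶜ) := fun a b hab =>
    Set.inter_subset_inter_right _ (Set.compl_subset_compl.2 (hGanti (by omega)))
  have hUB : U.μ (⋃ n : ℕ, (A N ∩ (G (N+n))ᶜ)) ≤ U.μ (A N) / 2 := by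
    rw [hmono2.directed_le.measure_iUnion]
    refine iSup_le fun n => ?_
    have h1 := hbound (N+n) (by omega)
    have hfin1 : U.μ (A N ∩ (G (N+n))ᶜ) ≠ ⊤ := measure_ne_top _ _
    have hfin2 : U.μ (A N) / 2 ≠ ⊤ := (ENNReal.div_lt_top (measure_ne_top _ _) (by norm_num)).ne
    rw [← ENNReal.ofReal_toReal hfin1, ← ENNReal.ofReal_toReal hfin2]
    apply ENNReal.ofReal_le_ofReal
    simp only [ENNReal.toReal_div, ENNReal.toReal_ofNat]
    linarith
  by_contra hcon
  push_neg at hcon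
  have hE0 : U.μ E = 0 := le_antisymm hcon (zero_le)
  have h1 : U.μ (A N) ≤ U.μ (A N ∩ E) + U.μ ((A N) \ E) := measure_le_inter_add_diff _ _ _
  have h2 : U.μ (A N ∩ E) = 0 :=
    le_antisymm (le_trans (measure_mono Set.inter_subset_right) hE0.le) (zero_le)
  have h3 : U.μ ((A N) \ E) ≤ U.μ (A N) / 2 := le_trans (measure_mono hsub) hUB
  have h4 : U.μ (A N) / 2 < U.μ (A N) := ENNReal.half_lt_self (hApos N).ne' (measure_ne_top _ _)
  rw [h2, zero_add] at h1
  exact absurd (lt_of_le_of_lt (le_trans h1 h3) h4) (lt_irrefl _)
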